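/- arXiv:1310.4289 — 4 statements merged into one kernel-verified Lean document; each statement's English description precedes it below -/
import Mathlib

section
/- Let 𝔠 be a nonzero fractional ideal of K and let α₀ ∈ K^×. Then the map H ↦ d(ᾱ₀)·H·d(α₀) is a bijection from Λ₂^{α₀𝔠}(𝓞) onto Λ₂^{𝔠}(𝓞), and it restricts to a bijection from Λ₂^{α₀𝔠}(𝓞)⁺ onto Λ₂^{𝔠}(𝓞)⁺ (i.e. it preserves positive definiteness in both directions). -/
open scoped ComplexOrder nonZeroDivisors
open NumberField Matrix

noncomputable section

/-- `d(a) = diag(1, a)` as a 2×2 complex matrix. -/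
def dMat (a : ℂ) : Matrix (Fin 2) (Fin 2) ℂ := Matrix.diagonal ![1, a]

/-- The lattice `Λ₂^𝔠(𝓞)` of hermitian matrices `[[n, α], [ᾱ, m / N(𝔠)]]` with
`n, m ∈ ℤ` and `α ∈ (√-D)⁻¹ 𝔠⁻¹`, regarded as complex matrices.  Here `sd ∈ K` plays
the role of `√-D`. -/
def Lambda2 (K : IntermediateField ℚ ℂ) [NumberField K] (sd : K)
    (c : FractionalIdeal (𝓞 K)⁰ K) : Set (Matrix (Fin 2) (Fin 2) ℂ) :=
  { H | ∃ (n m : ℤ) (a : K),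
      a ∈ ((FractionalIdeal.spanSingleton (𝓞 K)⁰ sd)⁻¹ * c⁻¹) ∧
      H = !![(n : ℂ), (a : ℂ); star (a : ℂ), (m : ℂ) / (FractionalIdeal.absNorm c : ℂ)] }

/-- The subset `Λ₂^𝔠(𝓞)⁺` of positive definite elements. -/
def Lambda2Pos (K : IntermediateField ℚ ℂ) [NumberField K] (sd : K)
    (c : FractionalIdeal (𝓞 K)⁰ K) : Set (Matrix (Fin 2) (Fin 2) ℂ) :=
  { H | H ∈ Lambda2 K sd c ∧ H.PosDef }

-- auxiliary lemmas


lemma dMat_mul_dMat (x y : ℂ) : dMat x * dMat y = dMat (x * y) := by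
  ext i j
  fin_cases i <;> fin_cases j <;> simp [dMat, Matrix.diagonal, Matrix.mul_apply, Fin.sum_univ_two]

lemma dMat_one : dMat 1 = 1 := by
  ext i j
  fin_cases i <;> fin_cases j <;> simp [dMat, Matrix.diagonal, Matrix.one_apply]

lemma dMat_conjTranspose (a : ℂ) : (dMat a)ᴴ = dMat (star a) := by
  ext i j
  fin_cases i <;> fin_cases j <;>
    simp [dMat, Matrix.diagonal, Matrix.conjTranspose_apply, Matrix.diagonal_apply]

lemma dMat_mul_mul (b a p q r s : ℂ) :
    dMat b * !![p, q; r, s] * dMat a = !![p, q * a; b * r, b * s * a] := by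
  ext i j
  fin_cases i <;> fin_cases j <;>
    simp [dMat, Matrix.mul_apply, Fin.sum_univ_two, mul_assoc]

lemma dMat_mulVec_ne_zero {a : ℂ} (ha : a ≠ 0) {x : Fin 2 → ℂ} (hx : x ≠ 0) :
    dMat a *ᵥ x ≠ 0 := by
  intro h
  apply hx
  funext i
  have h0 := congrFun h 0
  have h1 := congrFun h 1
  simp [dMat, Matrix.mulVec_diagonal] at h0 h1
  fin_cases i <;> simp_all [ha]

lemma posDef_conj {A : Matrix (Fin 2) (Fin 2) ℂ} (hA : A.PosDef) {a : ℂ} (ha : a ≠ 0) :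
    (dMat (star a) * A * dMat a).PosDef := by
  refine Matrix.PosDef.of_dotProduct_mulVec_pos ?_ ?_
  · rw [← dMat_conjTranspose]
    exact Matrix.isHermitian_conjTranspose_mul_mul _ hA.1
  · intro x hx
    rw [← dMat_conjTranspose]
    have := hA.dotProduct_mulVec_pos (x := dMat a *ᵥ x) (dMat_mulVec_ne_zero ha hx)
    simpa only [star_mulVec, dotProduct_mulVec, vecMul_vecMul] using this

lemma star_sd {D : ℕ} (hD : 0 < D) {z : ℂ} (hz : z ^ 2 = -(D : ℂ)) :
    star z = -z ∧ z ≠ 0 := by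
  have hz0 : z ≠ 0 := by
    intro h
    rw [h] at hz
    have : (D : ℂ) = 0 := by
      have := hz.symm
      simpa using this
    exact_mod_cast hD.ne' (by exact_mod_cast this)
  have hsq : (star z) ^ 2 = z ^ 2 := by
    rw [← star_pow, hz]
    simp
  have : (star z - z) * (star z + z) = 0 := by ring_nf; linear_combination hsq
  rcases mul_eq_zero.mp this with h | h
  · exfalso
    have hzz : (starRingEnd ℂ) z = z := sub_eq_zero.mp h
    have him : z.im = 0 := Complex.conj_eq_iff_im.mp hzz
    have hre : z = (z.re : ℂ) := (Complex.conj_eq_iff_re.mp hzz).symm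
    rw [hre] at hz
    have : (z.re : ℝ) ^ 2 = -(D : ℝ) := by exact_mod_cast hz
    nlinarith [sq_nonneg z.re, (Nat.cast_pos (α := ℝ)).mpr hD]
  · refine ⟨?_, hz0⟩
    have := eq_neg_of_add_eq_zero_left h
    simpa using this

lemma norm_cast_eq (K : IntermediateField ℚ ℂ) [NumberField K]
    (hdeg : Module.finrank ℚ K = 2)
    {sd : K} (hsd : star (sd : ℂ) = -(sd : ℂ)) (hsd0 : (sd : ℂ) ≠ 0) (x : K) :
    ((Algebra.norm ℚ x : ℚ) : ℂ) = (x : ℂ) * star (x : ℂ) := by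
  classical
  set ι : K →ₐ[ℚ] ℂ := K.val with hι
  set σ : K →ₐ[ℚ] ℂ := (Complex.conjAe.toAlgHom.restrictScalars ℚ).comp ι with hσ
  have hσx : ∀ y : K, σ y = star (y : ℂ) := fun y => rfl
  have hιx : ∀ y : K, ι y = (y : ℂ) := fun y => rfl
  have hne : ι ≠ σ := by
    intro h
    have : ι sd = σ sd := by rw [h]
    rw [hιx, hσx, hsd] at this
    apply hsd0
    have : (2 : ℂ) * (sd : ℂ) = 0 := by linear_combination this
    simpa using this
  have hcard : Fintype.card (K →ₐ[ℚ] ℂ) = 2 := by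
    rw [AlgHom.card]; exact hdeg
  have huniv : (Finset.univ : Finset (K →ₐ[ℚ] ℂ)) = {ι, σ} :=
    (Finset.eq_univ_of_card _ (by rw [Finset.card_pair hne, hcard])).symm
  have := Algebra.norm_eq_prod_embeddings ℚ ℂ x
  rw [huniv, Finset.prod_pair hne, hιx, hσx] at this
  rw [← this]
  simp

lemma absNorm_cast (K : IntermediateField ℚ ℂ) [NumberField K]
    (hdeg : Module.finrank ℚ K = 2)
    {sd : K} (hsd : star (sd : ℂ) = -(sd : ℂ)) (hsd0 : (sd : ℂ) ≠ 0)
    (c : FractionalIdeal (𝓞 K)⁰ K) (β : K) :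
    ((FractionalIdeal.absNorm (FractionalIdeal.spanSingleton (𝓞 K)⁰ β * c) : ℚ) : ℂ)
      = ((β : ℂ) * star (β : ℂ)) * ((FractionalIdeal.absNorm c : ℚ) : ℂ) := by
  have h1 : FractionalIdeal.absNorm (FractionalIdeal.spanSingleton (𝓞 K)⁰ β * c)
      = |Algebra.norm ℚ β| * FractionalIdeal.absNorm c := by
    rw [MonoidWithZeroHom.map_mul FractionalIdeal.absNorm, FractionalIdeal.absNorm_span_singleton]
  have h2 := norm_cast_eq K hdeg hsd hsd0 β
  have h3 : |Algebra.norm ℚ β| = Algebra.norm ℚ β := by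
    rw [abs_eq_self]
    have h4 : ((Algebra.norm ℚ β : ℚ) : ℂ) = ((Complex.normSq (β : ℂ) : ℝ) : ℂ) := by
      rw [h2, show star ((β : K) : ℂ) = (starRingEnd ℂ) ((β : K) : ℂ) from rfl,
        Complex.mul_conj']
      norm_cast
      rw [Complex.normSq_eq_norm_sq]
    have h5 : ((Algebra.norm ℚ β : ℚ) : ℝ) = Complex.normSq (β : ℂ) := by
      exact_mod_cast h4
    have := Complex.normSq_nonneg (β : ℂ)
    rw [← h5] at this
    exact_mod_cast this
  rw [h1, h3]
  push_cast
  rw [h2]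

lemma mem_shift (K : IntermediateField ℚ ℂ) [NumberField K] (sd : K)
    (c : FractionalIdeal (𝓞 K)⁰ K) {β : K} (hβ : β ≠ 0) {a : K}
    (ha : a ∈ ((FractionalIdeal.spanSingleton (𝓞 K)⁰ sd)⁻¹ *
      (FractionalIdeal.spanSingleton (𝓞 K)⁰ β * c)⁻¹)) :
    β * a ∈ ((FractionalIdeal.spanSingleton (𝓞 K)⁰ sd)⁻¹ * c⁻¹) := by
  have heq : (FractionalIdeal.spanSingleton (𝓞 K)⁰ sd)⁻¹ *
      (FractionalIdeal.spanSingleton (𝓞 K)⁰ β * c)⁻¹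
      = FractionalIdeal.spanSingleton (𝓞 K)⁰ β⁻¹ *
        ((FractionalIdeal.spanSingleton (𝓞 K)⁰ sd)⁻¹ * c⁻¹) := by
    rw [mul_inv, show (FractionalIdeal.spanSingleton (𝓞 K)⁰ β)⁻¹
      = FractionalIdeal.spanSingleton (𝓞 K)⁰ β⁻¹ from FractionalIdeal.spanSingleton_inv _ _]
    ring
  rw [heq] at ha
  obtain ⟨z, hz, rfl⟩ := FractionalIdeal.mem_singleton_mul.mp ha
  have : β * (β⁻¹ * z) = z := by
    field_simp
  rw [this]
  exact hz

lemma coe_ne_zero' {K : IntermediateField ℚ ℂ} {β : K} (hβ : β ≠ 0) : (β : ℂ) ≠ 0 := by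
  intro h
  exact hβ (by exact_mod_cast h)

lemma mapsTo_lambda2 (D : ℕ) (hD : 0 < D) (K : IntermediateField ℚ ℂ) [NumberField K]
    (hdeg : Module.finrank ℚ K = 2) (sd : K) (hsd : (sd : ℂ) ^ 2 = -(D : ℂ))
    (c : FractionalIdeal (𝓞 K)⁰ K) (hc : c ≠ 0) (β : K) (hβ : β ≠ 0) :
    Set.MapsTo (fun H => dMat (star (β : ℂ)) * H * dMat (β : ℂ))
      (Lambda2 K sd (FractionalIdeal.spanSingleton (𝓞 K)⁰ β * c))
      (Lambda2 K sd c) := by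
  obtain ⟨hstar, hsd0⟩ := star_sd hD hsd
  rintro H ⟨n, m, a, ha, rfl⟩
  have hβ0 : (β : ℂ) ≠ 0 := coe_ne_zero' hβ
  have hN := absNorm_cast K hdeg hstar hsd0 c β
  have hNc : ((FractionalIdeal.absNorm c : ℚ) : ℂ) ≠ 0 := by
    have := (FractionalIdeal.absNorm_eq_zero_iff (I := c)).not.mpr hc
    exact_mod_cast this
  have hmul : ((β * a : K) : ℂ) = (β : ℂ) * (a : ℂ) := by push_cast; ring
  refine ⟨n, m, β * a, mem_shift K sd c hβ ha, ?_⟩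
  simp only [dMat_mul_mul]
  have hdiag : star (β : ℂ) *
      ((m : ℂ) / ((FractionalIdeal.absNorm
        (FractionalIdeal.spanSingleton (𝓞 K)⁰ β * c) : ℚ) : ℂ)) * (β : ℂ)
      = (m : ℂ) / ((FractionalIdeal.absNorm c : ℚ) : ℂ) := by
    have hβs : star (β : ℂ) ≠ 0 := star_ne_zero.mpr hβ0
    have step : star (β : ℂ) *
        ((m : ℂ) / ((FractionalIdeal.absNorm
          (FractionalIdeal.spanSingleton (𝓞 K)⁰ β * c) : ℚ) : ℂ)) * (β : ℂ)
        = ((β : ℂ) * star (β : ℂ)) * (m : ℂ)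
          / (((β : ℂ) * star (β : ℂ)) * ((FractionalIdeal.absNorm c : ℚ) : ℂ)) := by
      rw [hN]; ring
    rw [step, mul_div_mul_left _ _ (mul_ne_zero hβ0 hβs)]
  rw [hmul, star_mul', hdiag, mul_comm (a : ℂ) (β : ℂ)]

lemma mapsTo_lambda2Pos (D : ℕ) (hD : 0 < D) (K : IntermediateField ℚ ℂ) [NumberField K]
    (hdeg : Module.finrank ℚ K = 2) (sd : K) (hsd : (sd : ℂ) ^ 2 = -(D : ℂ))
    (c : FractionalIdeal (𝓞 K)⁰ K) (hc : c ≠ 0) (β : K) (hβ : β ≠ 0) :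
    Set.MapsTo (fun H => dMat (star (β : ℂ)) * H * dMat (β : ℂ))
      (Lambda2Pos K sd (FractionalIdeal.spanSingleton (𝓞 K)⁰ β * c))
      (Lambda2Pos K sd c) := by
  rintro H ⟨hH, hpos⟩
  exact ⟨mapsTo_lambda2 D hD K hdeg sd hsd c hc β hβ hH,
    posDef_conj hpos (coe_ne_zero' hβ)⟩

lemma dMat_inv_conj (γ : ℂ) (hγ : γ ≠ 0) (H : Matrix (Fin 2) (Fin 2) ℂ) :
    dMat (star γ⁻¹) * (dMat (star γ) * H * dMat γ) * dMat γ⁻¹ = H := by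
  have h1 : dMat (star γ⁻¹) * dMat (star γ) = 1 := by
    rw [dMat_mul_dMat, star_inv₀, inv_mul_cancel₀ (star_ne_zero.mpr hγ), dMat_one]
  have h2 : dMat γ * dMat γ⁻¹ = 1 := by
    rw [dMat_mul_dMat, mul_inv_cancel₀ hγ, dMat_one]
  calc dMat (star γ⁻¹) * (dMat (star γ) * H * dMat γ) * dMat γ⁻¹
      = (dMat (star γ⁻¹) * dMat (star γ)) * H * (dMat γ * dMat γ⁻¹) := by
        simp only [mul_assoc]
    _ = H := by rw [h1, h2, one_mul, mul_one]

set_option synthInstance.maxHeartbeats 1000000 in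
lemma span_mul_ne_zero (K : IntermediateField ℚ ℂ) [NumberField K]
    {c : FractionalIdeal (𝓞 K)⁰ K} (hc : c ≠ 0) {α₀ : K} (hα₀ : α₀ ≠ 0) :
    FractionalIdeal.spanSingleton (𝓞 K)⁰ α₀ * c ≠ 0 :=
  mul_ne_zero (fun h => hα₀ (FractionalIdeal.spanSingleton_eq_zero_iff.mp h)) hc

/-- For a nonzero fractional ideal `𝔠` of `K` and `α₀ ∈ K^×`, the map
`H ↦ d(ᾱ₀) H d(α₀)` is a bijection from `Λ₂^{α₀𝔠}(𝓞)` onto `Λ₂^{𝔠}(𝓞)`, restricting to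
a bijection from `Λ₂^{α₀𝔠}(𝓞)⁺` onto `Λ₂^{𝔠}(𝓞)⁺`. -/
theorem stmt0
    (D : ℕ) (hD : 0 < D)
    (K : IntermediateField ℚ ℂ) [NumberField K]
    (hdeg : Module.finrank ℚ K = 2)
    (hdisc : NumberField.discr K = -(D : ℤ))
    (sd : K) (hsd : (sd : ℂ) ^ 2 = -(D : ℂ))
    (c : FractionalIdeal (𝓞 K)⁰ K) (hc : c ≠ 0)
    (α₀ : K) (hα₀ : α₀ ≠ 0) :
    Set.BijOn (fun H => dMat (star (α₀ : ℂ)) * H * dMat (α₀ : ℂ))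
      (Lambda2 K sd (FractionalIdeal.spanSingleton (𝓞 K)⁰ α₀ * c))
      (Lambda2 K sd c) ∧
    Set.BijOn (fun H => dMat (star (α₀ : ℂ)) * H * dMat (α₀ : ℂ))
      (Lambda2Pos K sd (FractionalIdeal.spanSingleton (𝓞 K)⁰ α₀ * c))
      (Lambda2Pos K sd c) := by
  have hα0 : (α₀ : ℂ) ≠ 0 := coe_ne_zero' hα₀
  have hcoeinv : ((α₀⁻¹ : K) : ℂ) = (α₀ : ℂ)⁻¹ := IntermediateField.coe_inv (S := K) α₀
  have hα₀c : FractionalIdeal.spanSingleton (𝓞 K)⁰ α₀ * c ≠ 0 :=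
    span_mul_ne_zero K hc hα₀
  have hprod : FractionalIdeal.spanSingleton (𝓞 K)⁰ α₀⁻¹ *
      (FractionalIdeal.spanSingleton (𝓞 K)⁰ α₀ * c) = c := by
    rw [← mul_assoc, FractionalIdeal.spanSingleton_mul_spanSingleton,
      inv_mul_cancel₀ hα₀, FractionalIdeal.spanSingleton_one, one_mul]
  -- the inverse map
  set g : Matrix (Fin 2) (Fin 2) ℂ → Matrix (Fin 2) (Fin 2) ℂ :=
    fun H => dMat (star ((α₀⁻¹ : K) : ℂ)) * H * dMat ((α₀⁻¹ : K) : ℂ) with hg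
  have hInv : Set.InvOn g
      (fun H => dMat (star (α₀ : ℂ)) * H * dMat (α₀ : ℂ))
      (Lambda2 K sd (FractionalIdeal.spanSingleton (𝓞 K)⁰ α₀ * c))
      (Lambda2 K sd c) := by
    constructor
    · intro H _
      simp only [hg, hcoeinv]
      exact dMat_inv_conj (α₀ : ℂ) hα0 H
    · intro H _
      simp only [hg, hcoeinv]
      have := dMat_inv_conj ((α₀ : ℂ))⁻¹ (inv_ne_zero hα0) H
      rwa [inv_inv] at this
  have hInvPos : Set.InvOn g
      (fun H => dMat (star (α₀ : ℂ)) * H * dMat (α₀ : ℂ))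
      (Lambda2Pos K sd (FractionalIdeal.spanSingleton (𝓞 K)⁰ α₀ * c))
      (Lambda2Pos K sd c) := by
    constructor
    · intro H _
      simp only [hg, hcoeinv]
      exact dMat_inv_conj (α₀ : ℂ) hα0 H
    · intro H _
      simp only [hg, hcoeinv]
      have := dMat_inv_conj ((α₀ : ℂ))⁻¹ (inv_ne_zero hα0) H
      rwa [inv_inv] at this
  have hmt := mapsTo_lambda2 D hD K hdeg sd hsd c hc α₀ hα₀
  have hmtg : Set.MapsTo g (Lambda2 K sd c)
      (Lambda2 K sd (FractionalIdeal.spanSingleton (𝓞 K)⁰ α₀ * c)) := by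
    have := mapsTo_lambda2 D hD K hdeg sd hsd
      (FractionalIdeal.spanSingleton (𝓞 K)⁰ α₀ * c) hα₀c α₀⁻¹ (inv_ne_zero hα₀)
    rwa [hprod] at this
  have hmtP := mapsTo_lambda2Pos D hD K hdeg sd hsd c hc α₀ hα₀
  have hmtgP : Set.MapsTo g (Lambda2Pos K sd c)
      (Lambda2Pos K sd (FractionalIdeal.spanSingleton (𝓞 K)⁰ α₀ * c)) := by
    have := mapsTo_lambda2Pos D hD K hdeg sd hsd
      (FractionalIdeal.spanSingleton (𝓞 K)⁰ α₀ * c) hα₀c α₀⁻¹ (inv_ne_zero hα₀)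
    rwa [hprod] at this
  exact ⟨hInv.bijOn hmt hmtg, hInvPos.bijOn hmtP hmtgP⟩

end
end

section
/- Let 𝔠 be a nonzero fractional ideal of K with norm C = N(𝔠), and let 𝔠̄ denote its conjugate ideal. Let B = [[b₁, β],[β̄, b₄]] be a hermitian matrix with b₁, b₄ ∈ ℚ and β ∈ K. Then Tr(B·Z) ∈ ℤ for every matrix Z = [[n, μ],[μ̄, C·m]] with n, m ∈ ℤ and μ ∈ 𝔠̄, if and only if B ∈ Λ₂^𝔠(𝓞). -/
open scoped ComplexOrder nonZeroDivisors
open NumberField Matrix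

set_option maxHeartbeats 1000000
set_option synthInstance.maxHeartbeats 400000
noncomputable section

lemma trace_coe (D : ℕ) (hD : 0 < D) (K : IntermediateField ℚ ℂ) [NumberField K]
    (hdeg : Module.finrank ℚ K = 2) (sd : K) (hsd : (sd : ℂ) ^ 2 = -(D : ℂ)) (x : K) :
    ((Algebra.trace ℚ K x : ℚ) : ℂ) = (x : ℂ) + star (x : ℂ) := by
  classical
  have h := trace_eq_sum_embeddings (K := ℚ) (L := K) (E := ℂ) (x := x)
  set φ₁ : K →ₐ[ℚ] ℂ := K.val with hφ₁
  set φ₂ : K →ₐ[ℚ] ℂ := ((starRingEnd ℂ).comp (K.val : K →+* ℂ)).toRatAlgHom with hφ₂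
  have hφ₂app : ∀ y : K, φ₂ y = star (y : ℂ) := fun y => rfl
  have hφ₁app : ∀ y : K, φ₁ y = (y : ℂ) := fun y => rfl
  have hne : φ₁ ≠ φ₂ := by
    intro hEq
    have h1 : (sd : ℂ) = star (sd : ℂ) := by
      conv_lhs => rw [← hφ₁app sd, hEq, hφ₂app sd]
    have h2 : (sd : ℂ) = ((sd : ℂ).re : ℂ) := (Complex.conj_eq_iff_re.mp h1.symm).symm
    have h3 : ((sd : ℂ).re : ℂ) ^ 2 = -(D : ℂ) := by rw [← h2]; exact hsd
    have h4 : (sd : ℂ).re ^ 2 = -(D:ℝ) := by exact_mod_cast h3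
    have : (0:ℝ) < D := by exact_mod_cast hD
    nlinarith [sq_nonneg (sd : ℂ).re]
  have hcard : Fintype.card (K →ₐ[ℚ] ℂ) = 2 := by rw [AlgHom.card]; exact hdeg
  have huniv : (Finset.univ : Finset (K →ₐ[ℚ] ℂ)) = {φ₁, φ₂} := by
    symm
    apply Finset.eq_univ_of_card
    rw [Finset.card_pair hne, hcard]
  rw [huniv, Finset.sum_pair hne] at h
  have : algebraMap ℚ ℂ (Algebra.trace ℚ K x) = ((Algebra.trace ℚ K x : ℚ) : ℂ) := by
    rw [eq_ratCast]
  rw [this] at h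
  rw [h, hφ₁app, hφ₂app]

lemma exists_theta (K : IntermediateField ℚ ℂ) [NumberField K]
    (hdeg : Module.finrank ℚ K = 2) :
    ∃ θ : 𝓞 K, (∀ x : 𝓞 K, ∃ p q : ℤ, x = (p : 𝓞 K) + (q : 𝓞 K) * θ) ∧
      Algebra.discr ℤ ![(1 : 𝓞 K), θ] = NumberField.discr K := by
  classical
  have hrank : Fintype.card (Module.Free.ChooseBasisIndex ℤ (𝓞 K)) = 2 := by
    rw [← Module.finrank_eq_card_chooseBasisIndex, RingOfIntegers.rank, hdeg]
  let e := Fintype.equivFinOfCardEq hrank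
  let b : Module.Basis (Fin 2) ℤ (𝓞 K) := (RingOfIntegers.basis K).reindex e
  set a₀ : ℤ := b.repr 1 0 with ha₀
  set a₁ : ℤ := b.repr 1 1 with ha₁
  have hone : (a₀ : 𝓞 K) * b 0 + (a₁ : 𝓞 K) * b 1 = 1 := by
    have h := b.sum_repr 1
    rw [Fin.sum_univ_two] at h
    simpa [zsmul_eq_mul, ha₀, ha₁] using h
  have hcop : IsCoprime a₀ a₁ := by
    rw [Int.isCoprime_iff_gcd_eq_one]
    set g : ℕ := Int.gcd a₀ a₁ with hg
    obtain ⟨c₀, hc₀⟩ : (g : ℤ) ∣ a₀ := Int.gcd_dvd_left a₀ a₁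
    obtain ⟨c₁, hc₁⟩ : (g : ℤ) ∣ a₁ := Int.gcd_dvd_right a₀ a₁
    have hgy : (g : 𝓞 K) * ((c₀ : 𝓞 K) * b 0 + (c₁ : 𝓞 K) * b 1) = 1 := by
      rw [← hone, hc₀, hc₁]; push_cast; ring
    rcases Nat.eq_zero_or_pos g with hg0 | hgpos
    · exfalso
      rw [hg0] at hgy
      simp at hgy
    · -- map to K
      set y : 𝓞 K := (c₀ : 𝓞 K) * b 0 + (c₁ : 𝓞 K) * b 1 with hy
      have hKy : ((g : ℚ) : K) * (y : K) = 1 := by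
        have := congrArg (algebraMap (𝓞 K) K) hgy
        push_cast at this ⊢
        simpa using this
      have hgQ : ((g:ℚ)) ≠ 0 := by positivity
      have hyval : algebraMap ℚ K ((g:ℚ)⁻¹) = (y : K) := by
        rw [map_inv₀, map_natCast]
        refine (eq_inv_of_mul_eq_one_left ?_).symm
        rw [← hKy]; push_cast; ring
      have hint : IsIntegral ℤ ((g:ℚ)⁻¹) := by
        have h1 : IsIntegral ℤ (y : K) := RingOfIntegers.isIntegral_coe y
        rw [← hyval] at h1
        exact (isIntegral_algebraMap_iff (algebraMap ℚ K).injective).mp h1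
      obtain ⟨z, hz⟩ := IsIntegrallyClosed.isIntegral_iff.mp hint
      have hz' : (z : ℚ) = (g:ℚ)⁻¹ := by rw [← hz]; simp [eq_ratCast]
      have hzg : (z : ℚ) * (g : ℚ) = 1 := by rw [hz']; field_simp
      have hzgZ : z * (g : ℤ) = 1 := by exact_mod_cast hzg
      have : (g:ℤ) ∣ 1 := Dvd.intro_left z hzgZ
      have hdvd : g ∣ 1 := by exact_mod_cast this
      exact Nat.dvd_one.mp hdvd
  obtain ⟨u, v, huv⟩ := hcop
  set θ : 𝓞 K := (-(v : 𝓞 K)) * b 0 + (u : 𝓞 K) * b 1 with hθ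
  have huv' : (u : 𝓞 K) * (a₀ : 𝓞 K) + (v : 𝓞 K) * (a₁ : 𝓞 K) = 1 := by
    exact_mod_cast congrArg (Int.cast : ℤ → 𝓞 K) huv
  have hspan : ∀ x : 𝓞 K, ∃ p q : ℤ, x = (p : 𝓞 K) + (q : 𝓞 K) * θ := by
    intro x
    obtain ⟨x₀, x₁, hx⟩ : ∃ x₀ x₁ : ℤ, x = (x₀ : 𝓞 K) * b 0 + (x₁ : 𝓞 K) * b 1 := by
      refine ⟨b.repr x 0, b.repr x 1, ?_⟩
      have h := b.sum_repr x
      rw [Fin.sum_univ_two] at h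
      simpa [zsmul_eq_mul] using h.symm
    refine ⟨x₀ * u + x₁ * v, x₁ * a₀ - x₀ * a₁, ?_⟩
    rw [hθ]
    push_cast
    linear_combination hx + ((x₀ : 𝓞 K) * u + (x₁ : 𝓞 K) * v) * hone -
      ((x₀ : 𝓞 K) * b 0 + (x₁ : 𝓞 K) * b 1) * huv'
  have hind : ∀ s t : ℤ, s • (1 : 𝓞 K) + t • θ = 0 → s = 0 ∧ t = 0 := by
    intro s t hst
    rw [hθ, zsmul_eq_mul, zsmul_eq_mul] at hst
    have hst' : ((s : 𝓞 K) * a₀ - (t : 𝓞 K) * v) * b 0 +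
        ((s : 𝓞 K) * a₁ + (t : 𝓞 K) * u) * b 1 = 0 := by
      linear_combination hst + (s : 𝓞 K) * hone
    have hst2 : (s * a₀ - t * v) • b 0 + (s * a₁ + t * u) • b 1 = 0 := by
      rw [zsmul_eq_mul, zsmul_eq_mul]; push_cast; linear_combination hst'
    have hrep : ∀ i : Fin 2, (s * a₀ - t * v) * (if 0 = i then 1 else 0) +
        (s * a₁ + t * u) * (if 1 = i then 1 else 0) = 0 := by
      intro i
      have h := congrArg (fun z => (b.repr z) i) hst2
      simp only [map_add, _root_.map_smul, map_zero, Module.Basis.repr_self, Finsupp.smul_apply,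
        Finsupp.add_apply, Finsupp.single_apply, Finsupp.zero_apply, smul_eq_mul] at h
      exact h
    have h0 : s * a₀ - t * v = 0 := by simpa using hrep 0
    have h1 : s * a₁ + t * u = 0 := by simpa using hrep 1
    constructor
    · linear_combination u * h0 + v * h1 - s * huv
    · linear_combination a₀ * h1 - a₁ * h0 - t * huv
  have hli : LinearIndependent ℤ ![(1 : 𝓞 K), θ] := LinearIndependent.pair_iff.mpr hind
  have hsp : ⊤ ≤ Submodule.span ℤ (Set.range ![(1 : 𝓞 K), θ]) := by
    intro x _
    obtain ⟨p, q, hx⟩ := hspan x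
    have h1 : (1 : 𝓞 K) ∈ Set.range ![(1 : 𝓞 K), θ] := ⟨0, rfl⟩
    have h2 : θ ∈ Set.range ![(1 : 𝓞 K), θ] := ⟨1, rfl⟩
    have hx' : x = p • (1 : 𝓞 K) + q • θ := by
      rw [zsmul_eq_mul, zsmul_eq_mul, mul_one]; exact hx
    rw [hx']
    exact Submodule.add_mem _ (Submodule.smul_mem _ _ (Submodule.subset_span h1))
      (Submodule.smul_mem _ _ (Submodule.subset_span h2))
  let B2 : Module.Basis (Fin 2) ℤ (𝓞 K) := Module.Basis.mk hli hsp
  have hB2 : ⇑B2 = ![(1 : 𝓞 K), θ] := Module.Basis.coe_mk _ _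
  refine ⟨θ, hspan, ?_⟩
  rw [← hB2]
  exact NumberField.discr_eq_discr K B2


lemma coe_intCast_OK (K : IntermediateField ℚ ℂ) [NumberField K] (p : ℤ) :
    (((p : 𝓞 K) : K) : ℂ) = (p : ℂ) := by
  rw [NumberField.RingOfIntegers.coe_eq_algebraMap, map_intCast]
  push_cast
  ring

/-- Let `𝔠` be a nonzero fractional ideal of `K` with norm `C`, and
let `B = [[b₁, β], [β̄, b₄]]` be hermitian with `b₁, b₄ ∈ ℚ` and `β ∈ K`.  Then
`Tr(B·Z) ∈ ℤ` for every `Z = [[n, μ], [μ̄, C·m]]` with `n, m ∈ ℤ` and `μ ∈ 𝔠̄`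
(equivalently `σ(μ) ∈ 𝔠`, where `σ` is the nontrivial automorphism of `K`, given by
complex conjugation), if and only if `B ∈ Λ₂^𝔠(𝓞)`. -/
theorem stmt4
    (D : ℕ) (hD : 0 < D)
    (K : IntermediateField ℚ ℂ) [NumberField K]
    (hdeg : Module.finrank ℚ K = 2)
    (hdisc : NumberField.discr K = -(D : ℤ))
    (sd : K) (hsd : (sd : ℂ) ^ 2 = -(D : ℂ))
    (σ : K ≃+* K) (hσ : ∀ x : K, ((σ x : K) : ℂ) = star (x : ℂ))
    (c : FractionalIdeal (𝓞 K)⁰ K) (hc : c ≠ 0)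
    (b₁ b₄ : ℚ) (β : K) :
    (∀ (n m : ℤ) (μ : K), σ μ ∈ c →
        ∃ k : ℤ,
          (!![(b₁ : ℂ), (β : ℂ); star (β : ℂ), (b₄ : ℂ)] *
            !![(n : ℂ), (μ : ℂ);
               star (μ : ℂ), (FractionalIdeal.absNorm c : ℂ) * (m : ℂ)]).trace = (k : ℂ)) ↔
      !![(b₁ : ℂ), (β : ℂ); star (β : ℂ), (b₄ : ℂ)] ∈ Lambda2 K sd c := by
  classical
  have hDC : (D : ℂ) ≠ 0 := Nat.cast_ne_zero.mpr hD.ne'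
  have hsdC : (sd : ℂ) ≠ 0 := by
    intro h
    apply hDC
    have : (-(D:ℂ)) = 0 := by rw [← hsd, h]; ring
    linear_combination -this
  have hsdK : sd ≠ 0 := by
    intro h
    apply hsdC
    rw [h]
    exact_mod_cast rfl
  have hstar : star (sd : ℂ) = -(sd : ℂ) := by
    have h1 : (star (sd:ℂ))^2 = (sd:ℂ)^2 := by
      rw [← star_pow, hsd]
      simp [star_neg]
    have h2 : (star (sd:ℂ) - (sd:ℂ)) * (star (sd:ℂ) + (sd:ℂ)) = 0 := by
      linear_combination h1
    rcases mul_eq_zero.mp h2 with h | h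
    · exfalso
      have h3 : star (sd:ℂ) = (sd:ℂ) := sub_eq_zero.mp h
      have h4 : (sd : ℂ) = ((sd : ℂ).re : ℂ) := (Complex.conj_eq_iff_re.mp h3).symm
      have h5 : ((sd:ℂ).re:ℂ)^2 = -(D:ℂ) := by rw [← h4]; exact hsd
      have h6 : ((sd:ℂ).re)^2 = -(D:ℝ) := by exact_mod_cast h5
      have h7 : (0:ℝ) < D := by exact_mod_cast hD
      nlinarith [sq_nonneg (sd:ℂ).re]
    · linear_combination h
  have htr : ∀ x : K, ((Algebra.trace ℚ K x : ℚ) : ℂ) = (x : ℂ) + star (x : ℂ) :=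
    trace_coe D hD K hdeg sd hsd
  have hσσ : ∀ x : K, σ (σ x) = x := by
    intro x
    apply Subtype.val_injective
    show ((σ (σ x) : K) : ℂ) = (x : ℂ)
    rw [hσ, hσ, star_star]
  obtain ⟨θ, hspan, hdiscθ⟩ := exists_theta K hdeg
  -- bridge for integral traces
  have key2 : ∀ x : 𝓞 K, ((Algebra.trace ℤ (𝓞 K) x : ℤ) : ℂ) =
      ((x : K) : ℂ) + star ((x : K) : ℂ) := by
    intro x
    have h1 : ((Algebra.trace ℤ (𝓞 K) x : ℤ) : ℚ) = Algebra.trace ℚ K (x : K) := by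
      have h2 := Algebra.algebraMap_intTrace (A := ℤ) (B := 𝓞 K) (K := ℚ) (L := K) x
      rw [Algebra.intTrace_eq_trace] at h2
      rw [← h2]
      simp [eq_intCast]
    calc ((Algebra.trace ℤ (𝓞 K) x : ℤ) : ℂ)
        = (((Algebra.trace ℤ (𝓞 K) x : ℤ) : ℚ) : ℂ) := by push_cast; ring
      _ = ((Algebra.trace ℚ K (x : K) : ℚ) : ℂ) := by rw [h1]
      _ = ((x : K) : ℂ) + star ((x : K) : ℂ) := htr _
  -- the discriminant relation
  have hdZ : Algebra.discr ℤ ![(1 : 𝓞 K), θ] = -(D : ℤ) := hdiscθ.trans hdisc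
  have hE : (((θ : K) : ℂ) - star ((θ : K) : ℂ)) ^ 2 = ((sd : ℂ)) ^ 2 := by
    rw [Algebra.discr_def, Matrix.det_fin_two] at hdZ
    have hdZ' : Algebra.trace ℤ (𝓞 K) ((1:𝓞 K) * 1) * Algebra.trace ℤ (𝓞 K) (θ * θ) -
        Algebra.trace ℤ (𝓞 K) ((1:𝓞 K) * θ) * Algebra.trace ℤ (𝓞 K) (θ * 1) = -(D : ℤ) := by
      simpa [Algebra.traceMatrix, Algebra.traceForm_apply] using hdZ
    have h := congrArg (Int.cast : ℤ → ℂ) hdZ'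
    push_cast at h
    rw [key2 ((1:𝓞 K) * 1), key2 (θ * θ), key2 ((1:𝓞 K) * θ), key2 (θ * 1)] at h
    have e1 : (((1 * 1 : 𝓞 K) : K) : ℂ) = 1 := by push_cast; ring
    have e2 : (((θ * θ : 𝓞 K) : K) : ℂ) = ((θ : K) : ℂ) * ((θ : K) : ℂ) := by push_cast; ring
    have e3 : (((1 * θ : 𝓞 K) : K) : ℂ) = ((θ : K) : ℂ) := by push_cast; ring
    have e4 : (((θ * 1 : 𝓞 K) : K) : ℂ) = ((θ : K) : ℂ) := by push_cast; ring
    rw [e1, e2, e3, e4] at h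
    rw [star_mul'] at h
    simp only [star_one] at h
    rw [hsd]
    linear_combination h
  have he : ((θ : K) : ℂ) - star ((θ : K) : ℂ) = (sd : ℂ) ∨
      ((θ : K) : ℂ) - star ((θ : K) : ℂ) = -(sd : ℂ) := by
    have h2 : ((((θ : K) : ℂ) - star ((θ : K) : ℂ)) - (sd : ℂ)) *
        ((((θ : K) : ℂ) - star ((θ : K) : ℂ)) + (sd : ℂ)) = 0 := by
      linear_combination hE
    rcases mul_eq_zero.mp h2 with h | h
    · exact Or.inl (sub_eq_zero.mp h)
    · exact Or.inr (eq_neg_of_add_eq_zero_left h)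
  -- L1 : traces of sd⁻¹ * integral elements are integers
  have keyL1 : ∀ bb : 𝓞 K, ∃ k : ℤ, (Algebra.trace ℚ K (sd⁻¹ * (bb : K)) : ℚ) = (k : ℚ) := by
    intro bb
    obtain ⟨p, q, hb⟩ := hspan bb
    have hbC : ((bb : K) : ℂ) = (p : ℂ) + (q : ℂ) * ((θ : K) : ℂ) := by
      rw [hb]
      push_cast [coe_intCast_OK]
      ring
    have hsbC : star ((bb : K) : ℂ) = (p : ℂ) + (q : ℂ) * star ((θ : K) : ℂ) := by
      rw [hbC, star_add, star_mul']
      simp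
    have hinvC : ((sd⁻¹ : K) : ℂ) = ((sd : ℂ))⁻¹ := map_inv₀ (algebraMap K ℂ) sd
    have h1 : ((sd⁻¹ * (bb : K) : K) : ℂ) = ((sd : ℂ))⁻¹ * ((p : ℂ) + (q : ℂ) * ((θ : K) : ℂ)) := by
      push_cast [hinvC, hbC]
      ring
    rcases he with h | h
    · refine ⟨q, ?_⟩
      have h2 : ((Algebra.trace ℚ K (sd⁻¹ * (bb : K)) : ℚ) : ℂ) = ((q : ℚ) : ℂ) := by
        rw [htr, h1, star_mul', star_inv₀, hstar, star_add, star_mul', star_intCast, star_intCast]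
        rw [show star ((θ : K) : ℂ) = ((θ : K) : ℂ) - (sd : ℂ) by linear_combination -h]
        field_simp
        push_cast
        ring
      exact_mod_cast h2
    · refine ⟨-q, ?_⟩
      have h2 : ((Algebra.trace ℚ K (sd⁻¹ * (bb : K)) : ℚ) : ℂ) = ((-q : ℤ) : ℂ) := by
        rw [htr, h1, star_mul', star_inv₀, hstar, star_add, star_mul', star_intCast, star_intCast]
        rw [show star ((θ : K) : ℂ) = ((θ : K) : ℂ) + (sd : ℂ) by linear_combination -h]
        field_simp
        push_cast
        ring
      exact_mod_cast h2
  -- L2 : elements with integral traces against 1 and θ land in sd⁻¹ 𝓞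
  have keyL2 : ∀ x : K, (∃ k : ℤ, (Algebra.trace ℚ K x : ℚ) = (k : ℚ)) →
      (∃ k : ℤ, (Algebra.trace ℚ K (x * (θ : K)) : ℚ) = (k : ℚ)) →
      sd * x ∈ (1 : FractionalIdeal (𝓞 K)⁰ K) := by
    rintro x ⟨k₁, h₁⟩ ⟨k₂, h₂⟩
    have hc₁ : (k₁ : ℂ) = (x : ℂ) + star (x : ℂ) := by
      rw [← htr x, h₁]
      push_cast
      ring
    have hc₂ : (k₂ : ℂ) = (x : ℂ) * ((θ : K) : ℂ) + star (x : ℂ) * star ((θ : K) : ℂ) := by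
      have h3 := htr (x * (θ : K))
      rw [h₂] at h3
      push_cast at h3 ⊢
      rw [star_mul'] at h3
      linear_combination h3
    have hct : ((Algebra.trace ℤ (𝓞 K) θ : ℤ) : ℂ) = ((θ : K) : ℂ) + star ((θ : K) : ℂ) :=
      key2 θ
    set t : ℤ := Algebra.trace ℤ (𝓞 K) θ with ht
    rcases he with h | h
    · refine (FractionalIdeal.mem_one_iff _).mpr ⟨((k₂ - k₁ * t : ℤ) : 𝓞 K) + (k₁ : 𝓞 K) * θ, ?_⟩
      apply Subtype.val_injective
      push_cast [coe_intCast_OK]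
      rw [hc₁, hc₂, hct]
      linear_combination ((x : ℂ)) * h
    · refine (FractionalIdeal.mem_one_iff _).mpr
        ⟨((-(k₂ - k₁ * t) : ℤ) : 𝓞 K) + ((-k₁ : ℤ) : 𝓞 K) * θ, ?_⟩
      apply Subtype.val_injective
      push_cast [coe_intCast_OK]
      rw [hc₁, hc₂, hct]
      linear_combination (-(x : ℂ)) * h
  -- the characterization of the ideal membership
  have hIff : ∀ y : K, y ∈ ((FractionalIdeal.spanSingleton (𝓞 K)⁰ sd)⁻¹ * c⁻¹) ↔
      (∀ ν ∈ c, ∃ k : ℤ, (Algebra.trace ℚ K (y * ν) : ℚ) = (k : ℚ)) := by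
    intro y
    rw [FractionalIdeal.spanSingleton_inv, FractionalIdeal.mem_singleton_mul]
    constructor
    · rintro ⟨γ, hγ, rfl⟩ ν hν
      have h1 : γ * ν ∈ (1 : FractionalIdeal (𝓞 K)⁰ K) :=
        (FractionalIdeal.mem_inv_iff hc).mp hγ ν hν
      obtain ⟨bb, hbb⟩ := (FractionalIdeal.mem_one_iff _).mp h1
      have h2 : sd⁻¹ * γ * ν = sd⁻¹ * (bb : K) := by
        rw [mul_assoc]
        congr 1
        exact hbb.symm
      rw [h2]
      exact keyL1 bb
    · intro h
      refine ⟨sd * y, ?_, by field_simp⟩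
      rw [FractionalIdeal.mem_inv_iff hc]
      intro ν hν
      have h1 : ∃ k : ℤ, (Algebra.trace ℚ K (y * ν) : ℚ) = (k : ℚ) := h ν hν
      have hν' : (θ : K) * ν ∈ c := by
        have := Submodule.smul_mem (c : Submodule (𝓞 K) K) θ hν
        rwa [Algebra.smul_def] at this
      have h2 : ∃ k : ℤ, (Algebra.trace ℚ K ((y * ν) * (θ : K)) : ℚ) = (k : ℚ) := by
        obtain ⟨k, hk⟩ := h ((θ : K) * ν) hν'
        refine ⟨k, ?_⟩
        rw [← hk]
        congr 1
        ring
      have h3 := keyL2 (y * ν) h1 h2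
      have h4 : sd * y * ν = sd * (y * ν) := by ring
      rwa [h4]
  -- trace of the matrix product
  have htrace : ∀ (n m : ℤ) (μ : K),
      (!![(b₁ : ℂ), (β : ℂ); star (β : ℂ), (b₄ : ℂ)] *
        !![(n : ℂ), (μ : ℂ);
           star (μ : ℂ), (FractionalIdeal.absNorm c : ℂ) * (m : ℂ)]).trace =
      (b₁ : ℂ) * (n : ℂ) + ((β : ℂ) * star (μ : ℂ) + star (β : ℂ) * (μ : ℂ)) +
        (b₄ : ℂ) * ((FractionalIdeal.absNorm c : ℂ) * (m : ℂ)) := by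
    intro n m μ
    rw [Matrix.trace_fin_two]
    simp [Matrix.mul_apply, Fin.sum_univ_two]
    ring
  have hCne : (FractionalIdeal.absNorm c : ℚ) ≠ 0 := by
    intro h
    exact hc (FractionalIdeal.absNorm_eq_zero_iff.mp h)
  have hCneC : (FractionalIdeal.absNorm c : ℂ) ≠ 0 := by
    exact_mod_cast hCne
  have hzero : (0 : K) ∈ c := by
    rw [← FractionalIdeal.mem_coe]
    exact (c : Submodule (𝓞 K) K).zero_mem
  constructor
  · intro H
    -- b₁ is an integer
    obtain ⟨k₁, hk₁⟩ := H 1 0 0 (by rw [map_zero]; exact hzero)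
    rw [htrace] at hk₁
    simp only [Int.cast_one, Int.cast_zero, mul_zero, mul_one, star_zero, zero_mul,
      add_zero, zero_add, ZeroMemClass.coe_zero] at hk₁
    have hb₁ : b₁ = (k₁ : ℚ) := by
      have : ((b₁ : ℚ) : ℂ) = ((k₁ : ℚ) : ℂ) := by
        push_cast
        push_cast at hk₁
        linear_combination hk₁
      exact_mod_cast this
    -- b₄ * C is an integer
    obtain ⟨k₄, hk₄⟩ := H 0 1 0 (by rw [map_zero]; exact hzero)
    rw [htrace] at hk₄
    simp only [Int.cast_one, Int.cast_zero, mul_zero, mul_one, star_zero, zero_mul,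
      add_zero, zero_add, ZeroMemClass.coe_zero] at hk₄
    have hb₄ : (b₄ : ℂ) = (k₄ : ℂ) / (FractionalIdeal.absNorm c : ℂ) := by
      field_simp
      push_cast at hk₄
      linear_combination hk₄
    -- β is in the dual ideal
    have hβ : β ∈ ((FractionalIdeal.spanSingleton (𝓞 K)⁰ sd)⁻¹ * c⁻¹) := by
      rw [hIff]
      intro ν hν
      have hσν : σ (σ ν) ∈ c := by rw [hσσ]; exact hν
      obtain ⟨k, hk⟩ := H 0 0 (σ ν) hσν
      rw [htrace] at hk
      simp only [Int.cast_zero, mul_zero, zero_mul, add_zero, zero_add, zero_mul] at hk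
      refine ⟨k, ?_⟩
      have h1 : ((Algebra.trace ℚ K (β * ν) : ℚ) : ℂ) = ((k : ℚ) : ℂ) := by
        rw [htr]
        rw [hσ] at hk
        rw [star_star] at hk
        push_cast at hk ⊢
        rw [star_mul']
        exact hk
      exact_mod_cast h1
    refine ⟨k₁, k₄, β, hβ, ?_⟩
    ext i j
    fin_cases i <;> fin_cases j <;> simp [hk₁, hb₄]
  · rintro ⟨n, m, a, ha, hmat⟩
    have h00 : (b₁ : ℂ) = (n : ℂ) := by
      have h := congrFun (congrFun hmat 0) 0
      simpa using h
    have h01 : (β : ℂ) = ((a : K) : ℂ) := by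
      have h := congrFun (congrFun hmat 0) 1
      simpa using h
    have h11 : (b₄ : ℂ) = (m : ℂ) / (FractionalIdeal.absNorm c : ℂ) := by
      have h := congrFun (congrFun hmat 1) 1
      simpa using h
    have hβa : β = a := Subtype.val_injective h01
    intro n' m' μ hμ
    obtain ⟨k, hk⟩ := (hIff a).mp ha (σ μ) hμ
    refine ⟨n * n' + k + m * m', ?_⟩
    rw [htrace]
    have hkC : ((Algebra.trace ℚ K ((a : K) * σ μ) : ℚ) : ℂ) = ((k : ℚ) : ℂ) := by
      exact_mod_cast congrArg (fun r : ℚ => (r : ℂ)) hk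
    have hmid : (β : ℂ) * star (μ : ℂ) + star (β : ℂ) * (μ : ℂ) = (k : ℂ) := by
      rw [hβa]
      have h2 := htr ((a : K) * σ μ)
      rw [hkC] at h2  -- careful orientation
      push_cast at h2
      rw [star_mul'] at h2
      rw [hσ] at h2
      rw [star_star] at h2
      push_cast
      linear_combination -h2
    rw [h00, h11, hmid]
    push_cast
    field_simp


end
end

section
/- Let D be a positive odd integer, and let h₁, h₂, h₃, h₄ be nonzero rational numbers with 2h₂ + h₃ ≠ 0. Write l_i = v₂(h_i), M = min(l₁, l₃, v₂(2h₂ + h₃), l₄), L = min(l₁, l₂, l₃, l₄), and ξ = h₁h₄ − h₃²/4 − (h₂ + h₃/2)²/D. Then: (a) if l₂ ≥ min(l₁, l₃, l₄), then M = L; (b) if l₂ < min(l₁, l₃, l₄), then M = l₂ + 1, L = l₂, ξ ≠ 0, and v₂(ξ) = 2·l₂ (in particular ξ·2^{−2(l₂+1)} is not a 2-adic integer). -/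
/-- If two rationals have different 2-adic valuations, their sum is nonzero. -/
lemma ne_zero_of_val_ne {x y : ℚ}
    (h : padicValRat 2 x ≠ padicValRat 2 y) : x + y ≠ 0 := by
  intro h0
  have hy : y = -x := by linarith [add_eq_zero_iff_eq_neg.mp h0]
  rw [hy, padicValRat.neg] at h
  exact h rfl

/-- A rational of valuation zero has odd numerator and denominator. -/
lemma num_den_odd {x : ℚ} (hx : x ≠ 0) (h : padicValRat 2 x = 0) :
    ¬ (2:ℤ) ∣ x.num ∧ ¬ 2 ∣ x.den := by
  have hcop := x.reduced
  have hnum : x.num ≠ 0 := Rat.num_ne_zero.2 hx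
  have hmn : (padicValInt 2 x.num : ℤ) = (padicValNat 2 x.den : ℤ) := by
    have := padicValRat_def 2 x
    omega
  by_cases hd : 2 ∣ x.den
  · -- then numerator not divisible by 2 (coprime), so padicValInt = 0, so padicValNat den = 0,
    -- contradicting divisibility
    have hnd : ¬ (2:ℤ) ∣ x.num := by
      intro hdvd
      have h1 : 2 ∣ x.num.natAbs := Int.ofNat_dvd_left.mp hdvd
      have h2 := Nat.dvd_gcd h1 hd
      rw [hcop] at h2
      omega
    have h0 : padicValInt 2 x.num = 0 := padicValInt.eq_zero_of_not_dvd hnd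
    have h1 : padicValNat 2 x.den = 0 := by omega
    have := one_le_padicValNat_of_dvd x.pos.ne' hd
    omega
  · constructor
    · intro hdvd
      have h1 : 2 ∣ x.num.natAbs := Int.ofNat_dvd_left.mp hdvd
      have h2 : 1 ≤ padicValNat 2 x.num.natAbs :=
        one_le_padicValNat_of_dvd (Int.natAbs_pos.mpr hnum).ne' h1
      have h3 : padicValNat 2 x.den = 0 := padicValNat.eq_zero_of_not_dvd hd
      have : padicValInt 2 x.num = padicValNat 2 x.num.natAbs := rfl
      omega
    · exact hd

/-- Odd + odd is even, 2-adically. -/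
lemma one_le_val_add {x y : ℚ} (hx : x ≠ 0) (hy : y ≠ 0) (hxy : x + y ≠ 0)
    (hvx : padicValRat 2 x = 0) (hvy : padicValRat 2 y = 0) :
    1 ≤ padicValRat 2 (x + y) := by
  obtain ⟨hxn, hxd⟩ := num_den_odd hx hvx
  obtain ⟨hyn, hyd⟩ := num_den_odd hy hvy
  set A : ℤ := x.num * y.den + x.den * y.num with hA
  set B : ℤ := (x.den : ℤ) * y.den with hB
  have hB0 : B ≠ 0 := by
    simp only [hB, mul_ne_zero_iff, Int.natCast_ne_zero]
    exact ⟨x.den_nz, y.den_nz⟩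
  have heq : x + y = (A : ℚ) / (B : ℚ) := by
    rw [hA, hB, Rat.add_num_den x y, Rat.divInt_eq_div]
  have hA0 : A ≠ 0 := by
    intro h0
    apply hxy
    rw [heq, h0]
    simp
  have hAdvd : (2:ℤ) ∣ A := by
    have o1 : Odd (x.num * (y.den : ℤ)) :=
      (Int.not_even_iff_odd.mp (fun he => hxn he.two_dvd)).mul
        (Int.not_even_iff_odd.mp (fun he => hyd (by simpa using Int.ofNat_dvd_left.mp he.two_dvd)))
    have o2 : Odd ((x.den : ℤ) * y.num) :=
      (Int.not_even_iff_odd.mp (fun he => hxd (by simpa using Int.ofNat_dvd_left.mp he.two_dvd))).mul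
        (Int.not_even_iff_odd.mp (fun he => hyn he.two_dvd))
    exact (o1.add_odd o2).two_dvd
  have hBodd : ¬ (2:ℤ) ∣ B := by
    intro hdvd
    rcases Int.prime_two.2.2 _ _ hdvd with h | h
    · exact hxd (by simpa using Int.ofNat_dvd_left.mp h)
    · exact hyd (by simpa using Int.ofNat_dvd_left.mp h)
  rw [heq, padicValRat.div (by exact_mod_cast hA0) (by exact_mod_cast hB0),
    padicValRat.of_int, padicValRat.of_int, padicValInt.eq_zero_of_not_dvd hBodd]
  have : 1 ≤ padicValInt 2 A := by
    have := (padicValInt_dvd_iff (p := 2) 1 A).mp (by simpa using hAdvd)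
    omega
  omega

lemma val_two_two : padicValRat 2 (2:ℚ) = 1 := by
  simpa using padicValRat.self (p := 2) (by norm_num)

lemma val_two_zpow (n : ℤ) : padicValRat 2 ((2:ℚ) ^ n) = n := by
  obtain ⟨k, rfl | rfl⟩ := n.eq_nat_or_neg
  · rw [zpow_natCast, padicValRat.pow (2:ℚ), val_two_two]
    simp
  · rw [zpow_neg, padicValRat.inv, zpow_natCast, padicValRat.pow (2:ℚ), val_two_two]
    simp


/-- Let `D` be a positive odd integer and `h₁, h₂, h₃, h₄` nonzero
rationals with `2h₂ + h₃ ≠ 0`.  Write `lᵢ = v₂(hᵢ)`,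
`M = min(l₁, l₃, v₂(2h₂+h₃), l₄)`, `L = min(l₁, l₂, l₃, l₄)` and
`ξ = h₁h₄ − h₃²/4 − (h₂ + h₃/2)²/D`.  Then:
(a) if `l₂ ≥ min(l₁, l₃, l₄)` then `M = L`;
(b) if `l₂ < min(l₁, l₃, l₄)` then `M = l₂ + 1`, `L = l₂`, `ξ ≠ 0` and
`v₂(ξ) = 2·l₂`. -/
theorem stmt10 (D : ℕ) (hD : 0 < D) (hDodd : Odd D)
    (h₁ h₂ h₃ h₄ : ℚ)
    (hh₁ : h₁ ≠ 0) (hh₂ : h₂ ≠ 0) (hh₃ : h₃ ≠ 0) (hh₄ : h₄ ≠ 0)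
    (hsum : 2 * h₂ + h₃ ≠ 0) :
    (padicValRat 2 h₂ ≥ min (min (padicValRat 2 h₁) (padicValRat 2 h₃))
        (padicValRat 2 h₄) →
      min (min (min (padicValRat 2 h₁) (padicValRat 2 h₃))
          (padicValRat 2 (2 * h₂ + h₃))) (padicValRat 2 h₄) =
        min (min (min (padicValRat 2 h₁) (padicValRat 2 h₂))
          (padicValRat 2 h₃)) (padicValRat 2 h₄)) ∧
    (padicValRat 2 h₂ < min (min (padicValRat 2 h₁) (padicValRat 2 h₃))
        (padicValRat 2 h₄) →
      min (min (min (padicValRat 2 h₁) (padicValRat 2 h₃))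
          (padicValRat 2 (2 * h₂ + h₃))) (padicValRat 2 h₄) = padicValRat 2 h₂ + 1 ∧
      min (min (min (padicValRat 2 h₁) (padicValRat 2 h₂))
          (padicValRat 2 h₃)) (padicValRat 2 h₄) = padicValRat 2 h₂ ∧
      h₁ * h₄ - h₃ ^ 2 / 4 - (h₂ + h₃ / 2) ^ 2 / (D : ℚ) ≠ 0 ∧
      padicValRat 2 (h₁ * h₄ - h₃ ^ 2 / 4 - (h₂ + h₃ / 2) ^ 2 / (D : ℚ)) =
        2 * padicValRat 2 h₂) := by
  have h2h₂ : (2:ℚ) * h₂ ≠ 0 := mul_ne_zero two_ne_zero hh₂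
  have hv2h₂ : padicValRat 2 (2 * h₂) = 1 + padicValRat 2 h₂ := by
    rw [padicValRat.mul two_ne_zero hh₂, val_two_two]
  have hsmin : min (1 + padicValRat 2 h₂) (padicValRat 2 h₃) ≤
      padicValRat 2 (2 * h₂ + h₃) := by
    have := padicValRat.min_le_padicValRat_add (p := 2) hsum
    rwa [hv2h₂] at this
  constructor
  · intro h
    omega
  · intro h
    set l₂ := padicValRat 2 h₂ with hl₂
    -- the valuation of 2h₂ + h₃
    have hs' : l₂ + 1 ≤ padicValRat 2 (2 * h₂ + h₃) := by omega
    have hM : min (min (min (padicValRat 2 h₁) (padicValRat 2 h₃))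
        (padicValRat 2 (2 * h₂ + h₃))) (padicValRat 2 h₄) = l₂ + 1 := by
      by_cases hl₃ : padicValRat 2 h₃ = l₂ + 1
      · omega
      · have : padicValRat 2 (2 * h₂ + h₃) =
            min (padicValRat 2 (2 * h₂)) (padicValRat 2 h₃) :=
          padicValRat.add_eq_min hsum h2h₂ hh₃ (by rw [hv2h₂]; omega)
        rw [hv2h₂] at this
        omega
    refine ⟨hM, by omega, ?_⟩
    -- now the ξ part
    have hDQ : (D : ℚ) ≠ 0 := Nat.cast_ne_zero.2 hD.ne'
    have hvD : padicValRat 2 (D : ℚ) = 0 := by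
      rw [padicValRat.of_nat]
      have : ¬ 2 ∣ D := by
        have := Nat.odd_iff.mp hDodd
        omega
      simp [padicValNat.eq_zero_of_not_dvd this]
    have hp1 : (2:ℚ) ^ (l₂ + 1) ≠ 0 := zpow_ne_zero _ two_ne_zero
    have hp0 : (2:ℚ) ^ l₂ ≠ 0 := zpow_ne_zero _ two_ne_zero
    set a : ℚ := h₃ / 2 ^ (l₂ + 1) with ha
    set b : ℚ := (2 * h₂ + h₃) / 2 ^ (l₂ + 1) with hb
    set u : ℚ := h₂ / 2 ^ l₂ with hu
    have ha0 : a ≠ 0 := div_ne_zero hh₃ hp1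
    have hb0 : b ≠ 0 := div_ne_zero hsum hp1
    have hu0 : u ≠ 0 := div_ne_zero hh₂ hp0
    have hva : padicValRat 2 a = padicValRat 2 h₃ - (l₂ + 1) := by
      rw [ha, padicValRat.div hh₃ hp1, val_two_zpow]
    have hvb : padicValRat 2 b = padicValRat 2 (2 * h₂ + h₃) - (l₂ + 1) := by
      rw [hb, padicValRat.div hsum hp1, val_two_zpow]
    have hvu : padicValRat 2 u = 0 := by
      rw [hu, padicValRat.div hh₂ hp0, val_two_zpow]; omega
    have hbau : b = u + a := by
      rw [ha, hb, hu, zpow_add_one₀ (two_ne_zero)]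
      field_simp
    -- the key claim
    have hkey : (padicValRat 2 ((D:ℚ) * a ^ 2) = 0 ∧
        1 ≤ padicValRat 2 (b ^ 2)) ∨
        (1 ≤ padicValRat 2 ((D:ℚ) * a ^ 2) ∧ padicValRat 2 (b ^ 2) = 0) := by
      have hT1 : padicValRat 2 ((D:ℚ) * a ^ 2) = 2 * padicValRat 2 a := by
        rw [padicValRat.mul hDQ (pow_ne_zero _ ha0), hvD,
          padicValRat.pow a]
        push_cast; ring
      have hT2 : padicValRat 2 (b ^ 2) = 2 * padicValRat 2 b := by
        rw [padicValRat.pow b]; push_cast; ring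
      by_cases hva0 : padicValRat 2 a = 0
      · left
        have hvb1 : 1 ≤ padicValRat 2 b := by
          rw [hbau]
          exact one_le_val_add hu0 ha0 (by rw [← hbau]; exact hb0) hvu hva0
        omega
      · right
        have hva1 : 1 ≤ padicValRat 2 a := by omega
        have hvb0 : padicValRat 2 b = 0 := by
          rw [hbau, padicValRat.add_eq_of_lt (by rw [← hbau]; exact hb0) hu0 ha0
            (by omega), hvu]
        omega
    set T : ℚ := (D:ℚ) * a ^ 2 + b ^ 2 with hT
    have hTne : T ≠ 0 := by
      rcases hkey with ⟨hx, hy⟩ | ⟨hx, hy⟩ <;>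
        exact ne_zero_of_val_ne (by omega)
    have hvT : padicValRat 2 T = 0 := by
      have := padicValRat.add_eq_min (p := 2) hTne
        (mul_ne_zero hDQ (pow_ne_zero _ ha0)) (pow_ne_zero _ hb0)
        (by rcases hkey with ⟨hx, hy⟩ | ⟨hx, hy⟩ <;> omega)
      rw [hT, this]
      rcases hkey with ⟨hx, hy⟩ | ⟨hx, hy⟩ <;> omega
    -- express ξ
    have heqξ : h₁ * h₄ - h₃ ^ 2 / 4 - (h₂ + h₃ / 2) ^ 2 / (D : ℚ) =
        h₁ * h₄ + -((2:ℚ) ^ (2 * l₂) * T / (D : ℚ)) := by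
      rw [hT, ha, hb, show (2:ℚ) ^ (2 * l₂) = 2 ^ l₂ * 2 ^ l₂ by
        rw [← zpow_add₀ (two_ne_zero : (2:ℚ) ≠ 0)]; ring_nf,
        zpow_add_one₀ (two_ne_zero : (2:ℚ) ≠ 0)]
      field_simp
      ring
    have hvsecond : padicValRat 2 (-((2:ℚ) ^ (2 * l₂) * T / (D : ℚ))) = 2 * l₂ := by
      rw [padicValRat.neg, padicValRat.div (mul_ne_zero (zpow_ne_zero _ two_ne_zero) hTne) hDQ,
        padicValRat.mul (zpow_ne_zero _ two_ne_zero) hTne, val_two_zpow, hvT, hvD]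
      ring
    have hsecond_ne : -((2:ℚ) ^ (2 * l₂) * T / (D : ℚ)) ≠ 0 := by
      simp only [neg_ne_zero]
      exact div_ne_zero (mul_ne_zero (zpow_ne_zero _ two_ne_zero) hTne) hDQ
    have hvh₁h₄ : padicValRat 2 (h₁ * h₄) = padicValRat 2 h₁ + padicValRat 2 h₄ :=
      padicValRat.mul hh₁ hh₄
    have hlt : padicValRat 2 (-((2:ℚ) ^ (2 * l₂) * T / (D : ℚ))) <
        padicValRat 2 (h₁ * h₄) := by omega
    have hξne : h₁ * h₄ + -((2:ℚ) ^ (2 * l₂) * T / (D : ℚ)) ≠ 0 := by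
      rw [add_comm]
      exact ne_zero_of_val_ne (by omega)
    refine ⟨by rw [heqξ]; exact hξne, ?_⟩
    rw [heqξ, add_comm, padicValRat.add_eq_of_lt (by rwa [add_comm]) hsecond_ne
      (mul_ne_zero hh₁ hh₄) hlt, hvsecond]
end

section
/- Let g ∈ GL₄(K) and λ ∈ ℚ^× satisfy σ(g)ᵀ·J·g = λ·J, where σ is applied to g entrywise. Then there exist α ∈ K^× and h ∈ GL₄(K) such that σ(h)ᵀ·J·h = λ·J, det(h) = λ², and g = h·r_α. -/
open Matrix NumberField Polynomial

noncomputable section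

/-- The matrix `J = [[0, −1₂], [1₂, 0]]` in 2×2 block form, over a ring `R`. -/
def J4 (R : Type*) [Ring R] : Matrix (Fin 2 ⊕ Fin 2) (Fin 2 ⊕ Fin 2) R :=
  Matrix.fromBlocks 0 (-1) 1 0

/-- In a degree-2 field extension, every automorphism is an involution. -/
lemma sigma_sq (K : Type*) [Field K] [NumberField K]
    (hdeg : Module.finrank ℚ K = 2) (σ : K ≃ₐ[ℚ] K) (x : K) : σ (σ x) = x := by
  classical
  by_cases h1 : σ x = x
  · rw [h1, h1]
  by_cases h2 : σ (σ x) = σ x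
  · exact absurd (σ.injective h2) h1
  by_contra hne
  have hint : IsIntegral ℚ x := Algebra.IsIntegral.isIntegral x
  set p := minpoly ℚ x with hp
  have hpne : p ≠ 0 := minpoly.ne_zero hint
  have hdeg2 : p.natDegree ≤ 2 := hdeg ▸ minpoly.natDegree_le x
  set pK := p.map (algebraMap ℚ K) with hpK
  have hpKne : pK ≠ 0 := Polynomial.map_ne_zero hpne
  have hroot : ∀ y : K, aeval y p = 0 → y ∈ pK.roots.toFinset := by
    intro y hy
    simp [hpK, Multiset.mem_toFinset, Polynomial.mem_roots', hpKne, hpne,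
      Polynomial.IsRoot, Polynomial.eval_map, ← aeval_def, hy]
  have h0 : aeval x p = 0 := minpoly.aeval ℚ x
  have hx : x ∈ pK.roots.toFinset := hroot x h0
  have hsx : σ x ∈ pK.roots.toFinset := hroot _ (by
    rw [Polynomial.aeval_algHom_apply σ x p, h0]; simp)
  have hssx : σ (σ x) ∈ pK.roots.toFinset := hroot _ (by
    rw [Polynomial.aeval_algHom_apply σ (σ x) p,
        Polynomial.aeval_algHom_apply σ x p, h0]; simp)
  have hsub : ({x, σ x, σ (σ x)} : Finset K) ⊆ pK.roots.toFinset := by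
    intro y hy
    simp only [Finset.mem_insert, Finset.mem_singleton] at hy
    rcases hy with rfl | rfl | rfl <;> assumption
  have hcard3 : ({x, σ x, σ (σ x)} : Finset K).card = 3 := by
    rw [Finset.card_insert_of_notMem (by
          simp only [Finset.mem_insert, Finset.mem_singleton]
          push_neg
          exact ⟨fun h => h1 h.symm, fun h => hne h.symm⟩),
        Finset.card_insert_of_notMem (by
          simp only [Finset.mem_singleton]
          exact fun h => h2 h.symm),
        Finset.card_singleton]
  have hle : 3 ≤ pK.roots.toFinset.card := hcard3 ▸ Finset.card_le_card hsub
  have h4 : pK.roots.toFinset.card ≤ 2 := by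
    calc pK.roots.toFinset.card ≤ Multiset.card pK.roots := Multiset.toFinset_card_le _
    _ ≤ pK.natDegree := Polynomial.card_roots' pK
    _ ≤ 2 := by rw [hpK, Polynomial.natDegree_map]; exact hdeg2
  omega

/-- Let `K` be an imaginary quadratic field with nontrivial
automorphism `σ`.  If `g ∈ GL₄(K)` and `λ ∈ ℚ^×` satisfy `σ(g)ᵀ J g = λ J`, then
there are `α ∈ K^×` and `h ∈ GL₄(K)` with `σ(h)ᵀ J h = λ J`, `det h = λ²` and
`g = h · r_α`, where `r_α = diag(1, α, 1, σ(α)⁻¹)`. -/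
theorem stmt11 (K : Type*) [Field K] [NumberField K]
    (hdeg : Module.finrank ℚ K = 2) (hdisc : NumberField.discr K < 0)
    (σ : K ≃ₐ[ℚ] K) (hσ : σ ≠ AlgEquiv.refl)
    (g : Matrix (Fin 2 ⊕ Fin 2) (Fin 2 ⊕ Fin 2) K) (hg : IsUnit g.det)
    (lam : ℚ) (hlam : lam ≠ 0)
    (hrel : (g.map (fun x => σ x))ᵀ * J4 K * g = (lam : K) • J4 K) :
    ∃ (α : K), α ≠ 0 ∧
      ∃ (h : Matrix (Fin 2 ⊕ Fin 2) (Fin 2 ⊕ Fin 2) K),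
        IsUnit h.det ∧
        (h.map (fun x => σ x))ᵀ * J4 K * h = (lam : K) • J4 K ∧
        h.det = (lam : K) ^ 2 ∧
        g = h * Matrix.fromBlocks (Matrix.diagonal ![1, α]) 0 0
              (Matrix.diagonal ![1, (σ α)⁻¹]) := by
  have hσ2 : ∀ x : K, σ (σ x) = x := sigma_sq K hdeg σ
  have hlamK : (lam : K) ≠ 0 := by exact_mod_cast Rat.cast_ne_zero.mpr hlam
  have hσlam : σ (lam : K) = (lam : K) := map_ratCast (σ : K →+* K) lam
  have hdetg : g.det ≠ 0 := hg.ne_zero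
  have hcard : Fintype.card (Fin 2 ⊕ Fin 2) = 4 := by simp
  -- determinant of J4 is a unit
  have hJJ : J4 K * J4 K = -1 := by
    simp only [J4, fromBlocks_multiply]
    simp [← Matrix.fromBlocks_one, fromBlocks_neg]
  have hdetJ : (J4 K).det * (J4 K).det = 1 := by
    rw [← det_mul, hJJ, det_neg, det_one, hcard]; norm_num
  have hdetJne : (J4 K).det ≠ 0 := by
    intro h; rw [h, zero_mul] at hdetJ; exact zero_ne_one hdetJ
  -- σ(det g) * det g = lam^4
  have hmapdet : (g.map fun x => σ x).det = σ g.det :=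
    (RingHom.map_det (σ : K →+* K) g).symm
  have hnorm : σ g.det * g.det = (lam : K) ^ 4 := by
    have hd := congrArg Matrix.det hrel
    rw [det_mul, det_mul, det_transpose, hmapdet, Matrix.det_smul, hcard] at hd
    have h2 : (σ g.det * g.det) * (J4 K).det = ((lam : K) ^ 4) * (J4 K).det := by
      rw [← hd]; ring
    exact mul_right_cancel₀ hdetJne h2
  set β : K := (lam : K) ^ 2 / g.det with hβdef
  have hβ0 : β ≠ 0 := div_ne_zero (pow_ne_zero 2 hlamK) hdetg
  have h1 : σ β * β = 1 := by
    rw [hβdef, map_div₀, map_pow, hσlam, div_mul_div_comm, hnorm,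
      show ((lam : K) ^ 2 * (lam : K) ^ 2) = (lam : K) ^ 4 by ring,
      div_self (pow_ne_zero 4 hlamK)]
  have hσβ : σ β = β⁻¹ := eq_inv_of_mul_eq_one_left h1
  -- construct α with σ α = β * α
  obtain ⟨α, hα0, hαβ⟩ : ∃ α : K, α ≠ 0 ∧ σ α = β * α := by
    by_cases hb : 1 + β⁻¹ = 0
    · have hβ1 : β = -1 := by
        have : β⁻¹ = -1 := by linear_combination hb
        rw [← inv_inv β, this]; norm_num
      obtain ⟨t, ht⟩ : ∃ t, σ t ≠ t := by
        by_contra hc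
        push_neg at hc
        exact hσ (AlgEquiv.ext hc)
      refine ⟨σ t - t, sub_ne_zero.mpr ht, ?_⟩
      rw [map_sub, hσ2 t, hβ1]; ring
    · refine ⟨1 + β⁻¹, hb, ?_⟩
      rw [map_add, _root_.map_one, map_inv₀, hσβ, inv_inv]
      field_simp
      ring
  have hσα0 : σ α ≠ 0 := fun h =>
    hα0 (σ.injective (h.trans (map_zero σ).symm))
  have hσαval : σ α = (lam : K) ^ 2 / g.det * α := by rw [hαβ, hβdef]
  -- the inverse of r_α
  set r : Matrix (Fin 2 ⊕ Fin 2) (Fin 2 ⊕ Fin 2) K :=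
    Matrix.fromBlocks (Matrix.diagonal ![1, α]) 0 0
      (Matrix.diagonal ![1, (σ α)⁻¹]) with hr
  set r' : Matrix (Fin 2 ⊕ Fin 2) (Fin 2 ⊕ Fin 2) K :=
    Matrix.fromBlocks (Matrix.diagonal ![1, α⁻¹]) 0 0
      (Matrix.diagonal ![1, σ α]) with hr'
  have hv1 : Matrix.diagonal (fun i => (![1, α⁻¹] : Fin 2 → K) i * ![1, α] i)
      = (1 : Matrix (Fin 2) (Fin 2) K) := by
    ext i j
    fin_cases i <;> fin_cases j <;>
      simp [Matrix.diagonal_apply, Matrix.one_apply, inv_mul_cancel₀ hα0]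
  have hv2 : Matrix.diagonal (fun i => (![1, σ α] : Fin 2 → K) i * ![1, (σ α)⁻¹] i)
      = (1 : Matrix (Fin 2) (Fin 2) K) := by
    ext i j
    fin_cases i <;> fin_cases j <;>
      simp [Matrix.diagonal_apply, Matrix.one_apply, mul_inv_cancel₀ hσα0]
  have hr'r : r' * r = 1 := by
    rw [hr, hr']
    simp only [fromBlocks_multiply, Matrix.mul_zero, Matrix.zero_mul,
      diagonal_mul_diagonal, add_zero, zero_add, hv1, hv2]
    exact Matrix.fromBlocks_one
  set h : Matrix (Fin 2 ⊕ Fin 2) (Fin 2 ⊕ Fin 2) K := g * r' with hh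
  -- determinant of h
  have hdetr' : r'.det = α⁻¹ * σ α := by
    rw [hr', Matrix.det_fromBlocks_zero₂₁]
    simp [Matrix.det_diagonal, Fin.prod_univ_two]
  have hdeth : h.det = (lam : K) ^ 2 := by
    rw [hh, det_mul, hdetr', hσαval]
    field_simp
  -- σ-image of r'
  have hmapr' : r'.map (fun x => σ x)
      = Matrix.fromBlocks (Matrix.diagonal ![1, (σ α)⁻¹]) 0 0
          (Matrix.diagonal ![1, α]) := by
    rw [hr']
    ext i j
    rcases i with i | i <;> rcases j with j | j <;> fin_cases i <;> fin_cases j <;>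
      simp [Matrix.map_apply, Matrix.fromBlocks, Matrix.diagonal, map_inv₀, hσ2]
  have hv3 : Matrix.diagonal (fun i => (![1, (σ α)⁻¹] : Fin 2 → K) i * ![1, σ α] i)
      = (1 : Matrix (Fin 2) (Fin 2) K) := by
    ext i j
    fin_cases i <;> fin_cases j <;>
      simp [Matrix.diagonal_apply, Matrix.one_apply, inv_mul_cancel₀ hσα0]
  have hv4 : Matrix.diagonal (fun i => (![1, α] : Fin 2 → K) i * ![1, α⁻¹] i)
      = (1 : Matrix (Fin 2) (Fin 2) K) := by
    ext i j
    fin_cases i <;> fin_cases j <;>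
      simp [Matrix.diagonal_apply, Matrix.one_apply, mul_inv_cancel₀ hα0]
  have hrur : (r'.map fun x => σ x)ᵀ * J4 K * r' = J4 K := by
    rw [hmapr', hr', J4, fromBlocks_transpose, transpose_zero,
      Matrix.diagonal_transpose, Matrix.diagonal_transpose]
    simp only [fromBlocks_multiply, Matrix.mul_zero, Matrix.zero_mul,
      Matrix.mul_neg, Matrix.neg_mul, Matrix.mul_one, Matrix.one_mul,
      add_zero, zero_add, neg_zero, diagonal_mul_diagonal, hv3, hv4]
  have hmaph : h.map (fun x => σ x)
      = (g.map fun x => σ x) * (r'.map fun x => σ x) := by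
    rw [hh]; exact Matrix.map_mul (f := (σ : K →+* K))
  refine ⟨α, hα0, h, ?_, ?_, hdeth, ?_⟩
  · rw [hdeth]; exact (IsUnit.mk0 _ (pow_ne_zero 2 hlamK))
  · have key : (r'.map fun x => σ x)ᵀ * ((g.map fun x => σ x)ᵀ * J4 K * g) * r'
        = (lam : K) • J4 K := by
      rw [hrel, Matrix.mul_smul, Matrix.smul_mul, hrur]
    calc (h.map fun x => σ x)ᵀ * J4 K * h
        = (r'.map fun x => σ x)ᵀ * ((g.map fun x => σ x)ᵀ * J4 K * g) * r' := by
          rw [hmaph, hh, transpose_mul]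
          simp only [Matrix.mul_assoc]
      _ = (lam : K) • J4 K := key
  · rw [hh, ← hr, Matrix.mul_assoc, hr'r, Matrix.mul_one]


end
end
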